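/- Let n ≥ 1 and let w : Fin (2n) → Fin 2 be a Dyck word (in particular balanced). For 0 ≤ r ≤ 2n, the rotation of w by r is again a Dyck word if and only if S_r(w) = 0, i.e. if and only if r is a return to zero of w (a boundary between indecomposable Dyck factors). -/

import Mathlib

/-- The rotation of a word `w : Fin L → A` by `r` positions. -/
def rotate {L : ℕ} {A : Type*} (r : ℕ) (w : Fin L → A) : Fin L → A :=
  fun i => w ⟨((i : ℕ) + r) % L, Nat.mod_lt _ (Nat.lt_of_le_of_lt (Nat.zero_le _) i.isLt)⟩

/-- The `j`-th prefix sum of a binary word, where letter `0` counts `+1`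
and letter `1` counts `-1`. -/
def prefixSum {L : ℕ} (w : Fin L → Fin 2) (j : ℕ) : ℤ :=
  ∑ i ∈ Finset.range j, if h : i < L then (if w ⟨i, h⟩ = 0 then 1 else -1) else 0

/-- `w` is a Dyck word: it is balanced (total sum zero) and all its prefix sums are
nonnegative. -/
def isDyck {L : ℕ} (w : Fin L → Fin 2) : Prop :=
  prefixSum w L = 0 ∧ ∀ j ≤ L, 0 ≤ prefixSum w j

lemma prefixSum_succ {L : ℕ} (w : Fin L → Fin 2) (k : ℕ) :
    prefixSum w (k + 1) = prefixSum w k +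
      (if h : k < L then (if w ⟨k, h⟩ = 0 then 1 else -1) else 0) :=
  Finset.sum_range_succ _ k

lemma rot_letter {L : ℕ} (w : Fin L → Fin 2) (r k : ℕ) (hk : k < L) :
    (if h : k < L then (if rotate r w ⟨k, h⟩ = 0 then (1:ℤ) else -1) else 0)
    = (if h : (k + r) % L < L then (if w ⟨(k + r) % L, h⟩ = 0 then 1 else -1) else 0) := by
  have hm : (k + r) % L < L := Nat.mod_lt _ (Nat.pos_of_ne_zero (by omega))
  rw [dif_pos hk, dif_pos hm]
  rfl

lemma rot_prefix {L : ℕ} (w : Fin L → Fin 2) (hbal : prefixSum w L = 0)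
    (r : ℕ) (hr : r ≤ L) (j : ℕ) (hj : j ≤ L) :
    prefixSum (rotate r w) j =
      (if j + r ≤ L then prefixSum w (j + r) else prefixSum w (j + r - L)) - prefixSum w r := by
  induction j with
  | zero => simp [prefixSum, hr]
  | succ j ih =>
    have hjL : j < L := hj
    have hpos : 0 < L := Nat.pos_of_ne_zero (by omega)
    rw [prefixSum_succ, ih (Nat.le_of_lt hjL),
      rot_letter w r j hjL]
    have hm : (j + r) % L < L := Nat.mod_lt _ hpos
    have hstep : (if h : (j + r) % L < L then (if w ⟨(j + r) % L, h⟩ = 0 then (1:ℤ) else -1) else 0)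
        = prefixSum w ((j + r) % L + 1) - prefixSum w ((j + r) % L) := by
      rw [prefixSum_succ]; ring
    rw [hstep]
    rcases lt_trichotomy (j + r) L with h | h | h
    · have hmod : (j + r) % L = j + r := Nat.mod_eq_of_lt h
      rw [hmod]
      rw [if_pos (Nat.le_of_lt h), if_pos (by omega : j + 1 + r ≤ L)]
      have : j + 1 + r = j + r + 1 := by ring
      rw [this]; ring
    · have hmod : (j + r) % L = 0 := by rw [h, Nat.mod_self]
      rw [hmod]
      rw [if_pos (Nat.le_of_eq h), if_neg (by omega : ¬ j + 1 + r ≤ L)]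
      have h1 : j + 1 + r - L = 1 := by omega
      rw [h1, h, hbal]
      have h0 : prefixSum w 0 = 0 := by simp [prefixSum]
      rw [h0]; ring
    · have hmod : (j + r) % L = j + r - L := by
        rw [Nat.mod_eq_sub_mod (Nat.le_of_lt h)]
        exact Nat.mod_eq_of_lt (by omega)
      rw [hmod]
      rw [if_neg (by omega : ¬ j + r ≤ L), if_neg (by omega : ¬ j + 1 + r ≤ L)]
      have : j + 1 + r - L = (j + r - L) + 1 := by omega
      rw [this]; ring

/-- For a Dyck word `w` of length `2n` (in particular balanced), the rotation of `w` by
`r ≤ 2n` is again a Dyck word iff `S_r(w) = 0`, i.e. iff `r` is a return to zero of `w`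
(a boundary between indecomposable Dyck factors). -/
theorem rotation_of_dyck_isDyck_iff
    (n : ℕ) (hn : 1 ≤ n) (w : Fin (2 * n) → Fin 2) (hw : isDyck w)
    (r : ℕ) (hr : r ≤ 2 * n) :
    isDyck (rotate r w) ↔ prefixSum w r = 0 := by
  obtain ⟨hbal, hpos⟩ := hw
  constructor
  · rintro ⟨hb', hp'⟩
    have h1 := hp' (2 * n - r) (by omega)
    rw [rot_prefix w hbal r hr _ (by omega)] at h1
    have he : 2 * n - r + r = 2 * n := by omega
    rw [he, if_pos le_rfl, hbal] at h1
    have h2 := hpos r hr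
    linarith
  · intro h0
    constructor
    · rw [rot_prefix w hbal r hr (2 * n) le_rfl, h0, sub_zero]
      split
      · have hr0 : r = 0 := by omega
        rw [hr0]; simpa using hbal
      · have : 2 * n + r - 2 * n = r := by omega
        rw [this, h0]
    · intro j hj
      rw [rot_prefix w hbal r hr j hj, h0, sub_zero]
      split
      · exact hpos _ ‹_›
      · exact hpos _ (by omega)
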